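/- Clifford inequality for the Baker–Norine rank: If d is a divisor on a connected weightless loopless multigraph G of genus g with 0 ≤ deg(d) ≤ 2g − 2, then 2·r_G(d) ≤ deg(d). -/

import Mathlib

open Finset

section Preliminaries

variable {V : Type} [Fintype V] [DecidableEq V]

/-- The degree of a divisor on a graph with vertex set `V`. -/
def degDiv (d : V → ℤ) : ℤ := ∑ v, d v

/-- A divisor is effective if it is nonnegative at every vertex. -/
def Effective (d : V → ℤ) : Prop := ∀ v, 0 ≤ d v

/-- The principal divisor `t_Z` associated to a subset `Z` of vertices, for the
graph with edge multiplicity function `m`. -/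
def tZ (m : V → V → ℕ) (Z : Finset V) : V → ℤ := fun v =>
  if v ∈ Z then -(∑ u ∈ Zᶜ, (m v u : ℤ)) else ∑ u ∈ Z, (m v u : ℤ)

/-- Two divisors are linearly equivalent if their difference lies in the subgroup
generated by the divisors `t_Z`. -/
def LinEquiv (m : V → V → ℕ) (d d' : V → ℤ) : Prop :=
  d - d' ∈ AddSubgroup.closure (Set.range (tZ m))

/-- The simple graph associated to an edge multiplicity function `m`
(an edge between distinct `u`, `v` whenever `m u v > 0`; loops are discarded). -/
def assocGraph (m : V → V → ℕ) : SimpleGraph V where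
  Adj u v := u ≠ v ∧ (0 < m u v ∨ 0 < m v u)
  symm := ⟨fun _ _ h => ⟨h.1.symm, h.2.symm⟩⟩
  loopless := ⟨fun _ h => h.1 rfl⟩

end Preliminaries

section Rank

variable {V : Type} [Fintype V] [DecidableEq V]

/-- The set of integers `k` such that either `k = -1`, or `k ≥ 0` and for every
effective divisor `e` of degree `k`, the divisor `d - e` is linearly equivalent
to an effective divisor. -/
def bnRankSet (m : V → V → ℕ) (d : V → ℤ) : Set ℤ :=
  {k : ℤ | k = -1 ∨ (0 ≤ k ∧ ∀ e : V → ℤ, Effective e → degDiv e = k →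
      ∃ f : V → ℤ, Effective f ∧ LinEquiv m (d - e) f)}

/-- The Baker–Norine rank of a divisor `d` on the weightless loopless multigraph
with edge multiplicity function `m`. -/
noncomputable def bnRank (m : V → V → ℕ) (d : V → ℤ) : ℤ := sSup (bnRankSet m d)

end Rank

section Genus

variable {V : Type} [Fintype V] [DecidableEq V]

/-- The genus of a weightless loopless multigraph: `|E| - |V| + 1` where
`|E| = (1/2) ∑_{u,v} m u v`. -/
def genus (m : V → V → ℕ) : ℤ :=
  (∑ u, ∑ v, (m u v : ℤ)) / 2 - Fintype.card V + 1

/-- The canonical divisor of a weightless loopless multigraph: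
`k_G(v) = val(v) - 2`. -/
def canonical (m : V → V → ℕ) : V → ℤ := fun v => (∑ u, (m v u : ℤ)) - 2

end Genus

namespace CliffordAux
variable {V : Type} [Fintype V] [DecidableEq V]

def Lap (m : V → V → ℕ) (σ : V → ℤ) : V → ℤ := fun v => ∑ u, (m v u : ℤ) * (σ u - σ v)

lemma tZ_eq_lap (m : V → V → ℕ) (Z : Finset V) :
    tZ m Z = Lap m (fun v => if v ∈ Z then 1 else 0) := by
  funext v
  simp only [tZ, Lap]
  by_cases hv : v ∈ Z
  · rw [if_pos hv, ← Finset.sum_add_sum_compl Z (fun u => (m v u : ℤ) * _)]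
    have h1 : ∀ u ∈ Z, (m v u : ℤ) * ((if u ∈ Z then (1:ℤ) else 0) - (if v ∈ Z then 1 else 0)) = 0 := by
      intro u hu; rw [if_pos hu, if_pos hv]; ring
    have h2 : ∀ u ∈ Zᶜ, (m v u : ℤ) * ((if u ∈ Z then (1:ℤ) else 0) - (if v ∈ Z then 1 else 0)) = -(m v u : ℤ) := by
      intro u hu; rw [if_neg (Finset.mem_compl.mp hu), if_pos hv]; ring
    rw [Finset.sum_congr rfl h1, Finset.sum_congr rfl h2, Finset.sum_neg_distrib]
    simp
  · rw [if_neg hv, ← Finset.sum_add_sum_compl Z (fun u => (m v u : ℤ) * _)]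
    have h1 : ∀ u ∈ Z, (m v u : ℤ) * ((if u ∈ Z then (1:ℤ) else 0) - (if v ∈ Z then 1 else 0)) = (m v u : ℤ) := by
      intro u hu; rw [if_pos hu, if_neg hv]; ring
    have h2 : ∀ u ∈ Zᶜ, (m v u : ℤ) * ((if u ∈ Z then (1:ℤ) else 0) - (if v ∈ Z then 1 else 0)) = 0 := by
      intro u hu; rw [if_neg (Finset.mem_compl.mp hu), if_neg hv]; ring
    rw [Finset.sum_congr rfl h1, Finset.sum_congr rfl h2]
    simp

lemma lap_single (m : V → V → ℕ) (hloop : ∀ v, m v v = 0) (σ : V → ℤ) :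
    Lap m σ = ∑ v, σ v • tZ m {v} := by
  funext x
  rw [Finset.sum_apply]
  simp only [Pi.smul_apply, smul_eq_mul, tZ, Finset.mem_singleton]
  rw [Lap]
  have h1 : ∀ v ∈ (univ : Finset V), σ v * (if x = v then -(∑ u ∈ ({v}ᶜ : Finset V), (m x u:ℤ)) else ∑ u ∈ {v}, (m x u:ℤ))
      = (if x = v then -(σ x * (∑ u, (m x u:ℤ))) else σ v * (m x v : ℤ)) := by
    intro v _
    by_cases h : x = v
    · subst h
      rw [if_pos rfl, if_pos rfl]
      have : (∑ u, (m x u : ℤ)) = ∑ u ∈ {x}, (m x u:ℤ) + ∑ u ∈ ({x}ᶜ : Finset V), (m x u:ℤ) :=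
        (Finset.sum_add_sum_compl {x} _).symm
      rw [Finset.sum_singleton, hloop] at this
      simp only [Nat.cast_zero, zero_add] at this
      rw [← this]; ring
    · rw [if_neg h, if_neg h, Finset.sum_singleton]
  rw [Finset.sum_congr rfl h1]
  rw [← Finset.add_sum_erase _ _ (Finset.mem_univ x), ← Finset.add_sum_erase _
    (fun v => if x = v then -(σ x * (∑ u, (m x u:ℤ))) else σ v * (m x v : ℤ)) (Finset.mem_univ x)]
  rw [if_pos rfl, hloop]
  have h2 : ∀ v ∈ univ.erase x, (if x = v then -(σ x * (∑ u, (m x u:ℤ))) else σ v * (m x v : ℤ))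
      = σ v * (m x v : ℤ) := by
    intro v hv
    rw [if_neg (Ne.symm (Finset.mem_erase.mp hv).1)]
  rw [Finset.sum_congr rfl h2]
  have h3 : (∑ u, (m x u : ℤ)) = ∑ u ∈ univ.erase x, (m x u : ℤ) := by
    rw [← Finset.add_sum_erase _ _ (Finset.mem_univ x), hloop]
    simp
  have h4 : ∀ v ∈ univ.erase x, (m x v : ℤ) * (σ v - σ x) = σ v * (m x v:ℤ) - (m x v:ℤ) * σ x := by
    intro v _; ring
  rw [Finset.sum_congr rfl h4, Finset.sum_sub_distrib, h3, ← Finset.sum_mul]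
  push_cast
  ring

lemma lap_add (m : V → V → ℕ) (σ τ : V → ℤ) : Lap m (σ + τ) = Lap m σ + Lap m τ := by
  funext x
  simp only [Lap, Pi.add_apply, ← Finset.sum_add_distrib]
  exact Finset.sum_congr rfl fun u _ => by ring

lemma lap_neg (m : V → V → ℕ) (σ : V → ℤ) : Lap m (-σ) = -(Lap m σ) := by
  funext x
  simp only [Lap, Pi.neg_apply, ← Finset.sum_neg_distrib]
  exact Finset.sum_congr rfl fun u _ => by ring

lemma linEquiv_iff (m : V → V → ℕ) (hloop : ∀ v, m v v = 0) (d d' : V → ℤ) :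
    LinEquiv m d d' ↔ ∃ σ, d - d' = Lap m σ := by
  constructor
  · intro h
    have mem : ∀ x ∈ Set.range (tZ m), ∃ σ, x = Lap m σ := by
      rintro x ⟨Z, rfl⟩
      exact ⟨_, tZ_eq_lap m Z⟩
    have zero : ∃ σ, (0 : V → ℤ) = Lap m σ := by
      refine ⟨0, ?_⟩
      funext x
      simp [Lap]
    have add : ∀ x y : V → ℤ, (∃ σ, x = Lap m σ) → (∃ σ, y = Lap m σ) →
        ∃ σ, x + y = Lap m σ := by
      rintro x y ⟨σ, rfl⟩ ⟨τ, rfl⟩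
      exact ⟨σ + τ, (lap_add m σ τ).symm⟩
    have neg : ∀ x : V → ℤ, (∃ σ, x = Lap m σ) → ∃ σ, -x = Lap m σ := by
      rintro x ⟨σ, rfl⟩
      exact ⟨-σ, (lap_neg m σ).symm⟩
    exact AddSubgroup.closure_induction (p := fun x _ => ∃ σ, x = Lap m σ)
      (fun x hx => mem x hx) zero (fun x y _ _ hx hy => add x y hx hy)
      (fun x _ hx => neg x hx) h
  · rintro ⟨σ, hσ⟩
    rw [LinEquiv, hσ, lap_single m hloop]
    exact AddSubgroup.sum_mem _ fun v _ =>
      AddSubgroup.zsmul_mem _ (AddSubgroup.subset_closure (Set.mem_range_self {v})) _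

lemma degDiv_sub (d d' : V → ℤ) : degDiv (d - d') = degDiv d - degDiv d' := by
  simp [degDiv, Finset.sum_sub_distrib]

lemma degDiv_add (d d' : V → ℤ) : degDiv (d + d') = degDiv d + degDiv d' := by
  simp [degDiv, Finset.sum_add_distrib]

lemma degDiv_lap (m : V → V → ℕ) (hsymm : ∀ u v, m u v = m v u) (σ : V → ℤ) :
    degDiv (Lap m σ) = 0 := by
  simp only [degDiv, Lap]
  have expand : ∀ v u : V, (m v u : ℤ) * (σ u - σ v) = (m v u : ℤ) * σ u - (m v u : ℤ) * σ v :=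
    fun v u => by ring
  simp only [expand, Finset.sum_sub_distrib]
  have : ∑ v, ∑ u, (m v u : ℤ) * σ u = ∑ v, ∑ u, (m v u : ℤ) * σ v := by
    rw [Finset.sum_comm]
    refine Finset.sum_congr rfl fun v _ => Finset.sum_congr rfl fun u _ => ?_
    rw [hsymm]
  rw [this, sub_self]

lemma linEquiv_degDiv (m : V → V → ℕ) (hsymm : ∀ u v, m u v = m v u)
    (hloop : ∀ v, m v v = 0) {d d' : V → ℤ} (h : LinEquiv m d d') :
    degDiv d = degDiv d' := by
  rw [linEquiv_iff m hloop] at h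
  obtain ⟨σ, hσ⟩ := h
  have := degDiv_lap m hsymm σ
  rw [← hσ, degDiv_sub] at this
  linarith

lemma effective_degDiv_nonneg {d : V → ℤ} (h : Effective d) : 0 ≤ degDiv d :=
  Finset.sum_nonneg fun v _ => h v

/-- The moderator divisor associated to an injective labelling `ρ`. -/
def nu (m : V → V → ℕ) (ρ : V → ℤ) : V → ℤ := fun v =>
  (∑ u ∈ univ.filter (fun u => ρ u < ρ v), (m v u : ℤ)) - 1

lemma filter_not_lt (m : V → V → ℕ) (hloop : ∀ v, m v v = 0)
    {ρ : V → ℤ} (hinj : Function.Injective ρ) (v : V) :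
    (∑ u ∈ univ.filter (fun u => ¬ ρ u < ρ v), (m v u : ℤ))
      = ∑ u ∈ univ.filter (fun u => ρ v < ρ u), (m v u : ℤ) := by
  have hset : univ.filter (fun u => ¬ ρ u < ρ v)
      = insert v (univ.filter (fun u => ρ v < ρ u)) := by
    ext u
    simp only [Finset.mem_filter, Finset.mem_univ, true_and, Finset.mem_insert, not_lt]
    constructor
    · intro h
      rcases lt_or_eq_of_le h with h' | h'
      · exact Or.inr h'
      · exact Or.inl (hinj h'.symm)
    · rintro (rfl | h)
      · exact le_refl _
      · exact le_of_lt h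
  rw [hset, Finset.sum_insert (by simp), hloop]
  simp

lemma nu_add_nu_neg (m : V → V → ℕ) (hloop : ∀ v, m v v = 0)
    {ρ : V → ℤ} (hinj : Function.Injective ρ) (v : V) :
    nu m ρ v + nu m (-ρ) v = (∑ u, (m v u : ℤ)) - 2 := by
  have key : (∑ u ∈ univ.filter (fun u => ρ u < ρ v), (m v u : ℤ))
      + (∑ u ∈ univ.filter (fun u => ρ v < ρ u), (m v u : ℤ)) = ∑ u, (m v u : ℤ) := by
    rw [← filter_not_lt m hloop hinj v]
    exact Finset.sum_filter_add_sum_filter_not univ _ _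
  have hneg : (univ.filter (fun u => (-ρ) u < (-ρ) v)) = univ.filter (fun u => ρ v < ρ u) := by
    ext u
    simp [neg_lt_neg_iff]
  simp only [nu, hneg]
  linarith

lemma degDiv_nu (m : V → V → ℕ) (hsymm : ∀ u v, m u v = m v u) (hloop : ∀ v, m v v = 0)
    {ρ : V → ℤ} (hinj : Function.Injective ρ) :
    degDiv (nu m ρ) = (∑ u, ∑ v, (m u v : ℤ)) / 2 - Fintype.card V := by
  have doub : ∑ v, ∑ u ∈ univ.filter (fun u => ρ u < ρ v), (m v u : ℤ)
      = ∑ v, ∑ u ∈ univ.filter (fun u => ρ v < ρ u), (m v u : ℤ) := by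
    simp only [Finset.sum_filter]
    rw [Finset.sum_comm]
    refine Finset.sum_congr rfl fun v _ => Finset.sum_congr rfl fun u _ => ?_
    rw [hsymm]
  have tot : ∑ u, ∑ v, (m u v : ℤ)
      = 2 * ∑ v, ∑ u ∈ univ.filter (fun u => ρ u < ρ v), (m v u : ℤ) := by
    have split : ∀ v, ∑ u, (m v u : ℤ)
        = (∑ u ∈ univ.filter (fun u => ρ u < ρ v), (m v u : ℤ))
          + ∑ u ∈ univ.filter (fun u => ρ v < ρ u), (m v u : ℤ) := by
      intro v
      rw [← filter_not_lt m hloop hinj v]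
      exact (Finset.sum_filter_add_sum_filter_not univ _ _).symm
    calc ∑ u, ∑ v, (m u v : ℤ) = ∑ v, ((∑ u ∈ univ.filter (fun u => ρ u < ρ v), (m v u : ℤ))
          + ∑ u ∈ univ.filter (fun u => ρ v < ρ u), (m v u : ℤ)) :=
        Finset.sum_congr rfl fun v _ => split v
      _ = _ := by
        rw [Finset.sum_add_distrib, ← doub]
        ring
  rw [degDiv]
  simp only [nu, Finset.sum_sub_distrib]
  rw [tot, Int.mul_ediv_cancel_left _ two_ne_zero]
  simp [Finset.card_univ]

/-- Key lemma: a moderator divisor is not linearly equivalent to any effective divisor. -/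
lemma nu_not_equiv_eff (m : V → V → ℕ) (hloop : ∀ v, m v v = 0) [Nonempty V]
    {ρ : V → ℤ} (hinj : Function.Injective ρ) :
    ¬ ∃ f, Effective f ∧ LinEquiv m (nu m ρ) f := by
  rintro ⟨f, hf, hlin⟩
  rw [linEquiv_iff m hloop] at hlin
  obtain ⟨σ, hσ⟩ := hlin
  obtain ⟨v, -, hv⟩ := Finset.exists_min_image (univ : Finset V)
    (fun v => toLex (σ v, ρ v)) Finset.univ_nonempty
  have hfv : f v = nu m ρ v - Lap m σ v := by
    have := congrFun hσ v
    simp only [Pi.sub_apply] at this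
    linarith
  have hlow : (∑ u ∈ univ.filter (fun u => ρ u < ρ v), (m v u : ℤ)) ≤ Lap m σ v := by
    rw [Lap, Finset.sum_filter]
    refine Finset.sum_le_sum fun u _ => ?_
    have hlex := hv u (Finset.mem_univ u)
    rw [Prod.Lex.le_iff] at hlex
    by_cases h : ρ u < ρ v
    · rw [if_pos h]
      rcases hlex with h' | ⟨h1, h2⟩
      · have : (1:ℤ) ≤ σ u - σ v := by dsimp at h'; omega
        calc (m v u : ℤ) = (m v u : ℤ) * 1 := by ring
          _ ≤ (m v u : ℤ) * (σ u - σ v) :=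
            mul_le_mul_of_nonneg_left this (by positivity)
      · dsimp at h2
        exact absurd h2 (not_le.mpr h)
    · rw [if_neg h]
      have : (0:ℤ) ≤ σ u - σ v := by
        rcases hlex with h' | ⟨h1, h2⟩
        · dsimp at h'; omega
        · dsimp at h1; omega
      positivity
  have : f v ≤ -1 := by
    rw [hfv, nu]
    linarith
  linarith [hf v]

section Distance

variable {m : V → V → ℕ}

/-- distance to the base point. -/
noncomputable def dst (m : V → V → ℕ) (q v : V) : ℕ := (assocGraph m).dist q v

lemma adj_pos (hsymm : ∀ u v, m u v = m v u) {u v : V}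
    (h : (assocGraph m).Adj u v) : 0 < m u v := by
  rcases h.2 with h' | h'
  · exact h'
  · rw [hsymm]; exact h'

lemma adj_of_pos {u v : V} (hne : u ≠ v) (h : 0 < m u v) : (assocGraph m).Adj u v :=
  ⟨hne, Or.inl h⟩

lemma dst_lt_card (hconn : (assocGraph m).Connected) (q v : V) :
    dst m q v < Fintype.card V := by
  obtain ⟨p⟩ := hconn q v
  have h1 := SimpleGraph.dist_le (p.toPath : (assocGraph m).Walk q v)
  have h2 := p.toPath.2.length_lt
  rw [dst]
  omega

lemma dst_self (q : V) : dst m q q = 0 := SimpleGraph.dist_self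

lemma dst_pos (hconn : (assocGraph m).Connected) {q v : V} (h : v ≠ q) :
    0 < dst m q v :=
  hconn.pos_dist_of_ne (Ne.symm h)

lemma dst_eq_zero (hconn : (assocGraph m).Connected) {q v : V} (h : dst m q v = 0) :
    v = q := by
  by_contra hne
  exact absurd h (Nat.pos_iff_ne_zero.mp (dst_pos hconn hne))

lemma exists_closer_neighbor (hsymm : ∀ u v, m u v = m v u)
    (hconn : (assocGraph m).Connected) {q v : V} (h : v ≠ q) :
    ∃ u, 0 < m v u ∧ dst m q u + 1 = dst m q v := by
  obtain ⟨p, hp⟩ := (hconn v q).exists_walk_length_eq_dist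
  cases p with
  | nil => exact absurd rfl h
  | @cons _ u _ hadj p' =>
    refine ⟨u, adj_pos hsymm hadj, ?_⟩
    have h1 : dst m q u ≤ p'.length := by
      have := SimpleGraph.dist_le p'.reverse
      rw [SimpleGraph.Walk.length_reverse] at this
      rw [dst]
      exact this
    have h2 : p'.length + 1 = dst m q v := by
      rw [SimpleGraph.Walk.length_cons] at hp
      rw [dst, SimpleGraph.dist_comm]
      exact hp
    have h3 : dst m q v ≤ dst m q u + 1 := by
      have htri := hconn.dist_triangle (u := q) (v := u) (w := v)
      have hadj1 : (assocGraph m).dist u v ≤ 1 := by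
        have := SimpleGraph.dist_le (SimpleGraph.Walk.cons hadj.symm SimpleGraph.Walk.nil)
        simpa using this
      rw [dst, dst]
      omega
    omega

lemma dst_le_of_adj (hconn : (assocGraph m).Connected) {q v u : V}
    (h : (assocGraph m).Adj v u) : dst m q u ≤ dst m q v + 1 := by
  have htri := hconn.dist_triangle (u := q) (v := v) (w := u)
  have hadj1 : (assocGraph m).dist v u ≤ 1 := by
    have := SimpleGraph.dist_le (SimpleGraph.Walk.cons h SimpleGraph.Walk.nil)
    simpa using this
  rw [dst, dst]
  omega

end Distance

section StarLemma

variable {m : V → V → ℕ}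

lemma exists_equiv_eff_off_q (hsymm : ∀ u v, m u v = m v u) (hloop : ∀ v, m v v = 0)
    (hconn : (assocGraph m).Connected) (q : V) (a : V → ℤ) :
    ∃ x, LinEquiv m a x ∧ ∀ v, v ≠ q → 0 ≤ x v := by
  classical
  set n := Fintype.card V with hn
  set B : ℤ := (∑ u, ∑ v, (m u v : ℤ)) + 2 with hBdef
  have hB2 : 2 ≤ B := by
    have : (0:ℤ) ≤ ∑ u, ∑ v, (m u v : ℤ) :=
      Finset.sum_nonneg fun u _ => Finset.sum_nonneg fun v _ => by positivity
    omega
  have hB1 : (1:ℤ) ≤ B := by omega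
  have hB0 : (0:ℤ) ≤ B := by omega
  set C : ℤ := ∑ v, |a v| with hCdef
  have hC0 : 0 ≤ C := Finset.sum_nonneg fun v _ => abs_nonneg _
  have hCa : ∀ v, -a v ≤ C := by
    intro v
    have h1 : |a v| ≤ C := Finset.single_le_sum (f := fun v => |a v|)
      (fun i _ => abs_nonneg _) (Finset.mem_univ v)
    have := neg_abs_le (a v)
    omega
  set φ : ℕ → ℤ := fun k => ∑ j ∈ Finset.range k, C * B^(n-1-j) with hφdef
  have hφmono : ∀ j k : ℕ, j ≤ k → φ j ≤ φ k := by
    intro j k hjk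
    exact Finset.sum_le_sum_of_subset_of_nonneg
      (Finset.range_subset_range.mpr hjk) (fun i _ _ => by positivity)
  have hφsucc : ∀ k : ℕ, φ (k+1) = φ k + C * B^(n-1-k) := by
    intro k
    rw [hφdef]
    exact Finset.sum_range_succ _ k
  set σ : V → ℤ := fun v => φ (dst m q v) with hσdef
  refine ⟨a - Lap m σ, ?_, ?_⟩
  · rw [LinEquiv]
    have : a - (a - Lap m σ) = Lap m σ := by funext v; simp
    rw [this, lap_single m hloop]
    exact AddSubgroup.sum_mem _ fun v _ =>
      AddSubgroup.zsmul_mem _ (AddSubgroup.subset_closure (Set.mem_range_self {v})) _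
  · intro v hv
    obtain ⟨u₀, hu₀pos, hu₀d⟩ := exists_closer_neighbor hsymm hconn hv
    have hdvpos : 0 < dst m q v := dst_pos hconn hv
    have hdvlt : dst m q v < n := dst_lt_card hconn q v
    set e₁ : ℕ := n - 1 - dst m q v with he₁
    have hexp : n - 1 - dst m q u₀ = e₁ + 1 := by omega
    have hterm0 : (m v u₀ : ℤ) * (σ u₀ - σ v) ≤ -(C * B^(e₁+1)) := by
      have : σ v = σ u₀ + C * B^(e₁+1) := by
        rw [hσdef]
        dsimp only
        rw [← hexp, ← hφsucc, hu₀d]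
      rw [this]
      have h1 : (1:ℤ) ≤ (m v u₀ : ℤ) := by exact_mod_cast hu₀pos
      have h2 : (0:ℤ) ≤ C * B^(e₁+1) := by positivity
      nlinarith
    have hterm : ∀ u, u ≠ u₀ → (m v u : ℤ) * (σ u - σ v) ≤ (m v u : ℤ) * (C * B^e₁) := by
      intro u hu
      by_cases hmz : m v u = 0
      · rw [hmz]; simp
      · have hne : v ≠ u := by
          intro h; rw [h, hloop] at hmz; exact hmz rfl
        have hadj : (assocGraph m).Adj v u := adj_of_pos hne (Nat.pos_of_ne_zero hmz)
        have hdu : dst m q u ≤ dst m q v + 1 := dst_le_of_adj hconn hadj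
        have hφu : σ u ≤ σ v + C * B^e₁ := by
          rw [hσdef]
          dsimp only
          have h1 : φ (dst m q u) ≤ φ (dst m q v + 1) := hφmono _ _ hdu
          have h2 : φ (dst m q v + 1) = φ (dst m q v) + C * B^(n-1-dst m q v) := hφsucc _
          rw [← he₁] at h2
          omega
        have : σ u - σ v ≤ C * B^e₁ := by omega
        exact mul_le_mul_of_nonneg_left this (by positivity)
    have hsum : Lap m σ v ≤ -(C * B^(e₁+1)) + (B - 2) * (C * B^e₁) := by
      rw [Lap]
      rw [← Finset.add_sum_erase _ (fun u => (m v u : ℤ) * (σ u - σ v)) (Finset.mem_univ u₀)]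
      have hrest : ∑ u ∈ univ.erase u₀, (m v u : ℤ) * (σ u - σ v)
          ≤ ∑ u ∈ univ.erase u₀, (m v u : ℤ) * (C * B^e₁) := by
        refine Finset.sum_le_sum fun u hu => hterm u (Finset.mem_erase.mp hu).1
      have hrest2 : ∑ u ∈ univ.erase u₀, (m v u : ℤ) * (C * B^e₁)
          ≤ (B - 2) * (C * B^e₁) := by
        rw [← Finset.sum_mul]
        refine mul_le_mul_of_nonneg_right ?_ (by positivity)
        have h1 : ∑ u ∈ univ.erase u₀, (m v u : ℤ) ≤ ∑ u, (m v u : ℤ) :=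
          Finset.sum_le_sum_of_subset_of_nonneg (Finset.erase_subset _ _)
            (fun i _ _ => by positivity)
        have h2 : ∑ u, (m v u : ℤ) ≤ ∑ w, ∑ u, (m w u : ℤ) :=
          Finset.single_le_sum (f := fun w => ∑ u, (m w u : ℤ))
            (fun i _ => Finset.sum_nonneg fun u _ => by positivity) (Finset.mem_univ v)
        have h3 : ∑ w, ∑ u, (m w u : ℤ) = B - 2 := by rw [hBdef]; ring
        omega
      linarith [hterm0]
    have hfinal : Lap m σ v ≤ -C := by
      have hpow : (1:ℤ) ≤ B^e₁ := one_le_pow₀ hB1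
      have : -(C * B^(e₁+1)) + (B - 2) * (C * B^e₁) = -2 * (C * B^e₁) := by ring
      rw [this] at hsum
      nlinarith
    have := hCa v
    simp only [Pi.sub_apply]
    omega

lemma exists_reduced (hsymm : ∀ u v, m u v = m v u) (hloop : ∀ v, m v v = 0)
    (hconn : (assocGraph m).Connected) (q : V) (a : V → ℤ) :
    ∃ x, LinEquiv m a x ∧ (∀ v, v ≠ q → 0 ≤ x v) ∧
      (∀ A : Finset V, A.Nonempty → q ∉ A → ∃ v ∈ A, x v + 1 ≤ ∑ u ∈ Aᶜ, (m v u : ℤ)) := by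
  classical
  set n := Fintype.card V with hn
  set Mt : ℤ := ∑ u, ∑ v, (m u v : ℤ) with hMt
  have hMt0 : 0 ≤ Mt :=
    Finset.sum_nonneg fun u _ => Finset.sum_nonneg fun v _ => by positivity
  set B : ℤ := Mt + 2 with hBdef
  have hB1 : (1:ℤ) ≤ B := by omega
  set w : V → ℤ := fun v => B^(n - 1 - dst m q v) with hwdef
  have hw0 : ∀ v, 0 ≤ w v := fun v => by rw [hwdef]; positivity
  have hwq : ∀ v, w v ≤ w q := by
    intro v
    rw [hwdef]
    dsimp only
    rw [dst_self]
    exact pow_le_pow_right₀ hB1 (by omega)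
  set Φ : (V → ℤ) → ℤ := fun x => ∑ v, x v * w v with hΦdef
  set P : ℤ → Prop := fun z =>
    ∃ x, (LinEquiv m a x ∧ ∀ v, v ≠ q → 0 ≤ x v) ∧ Φ x = z with hPdef
  have hbdd : ∀ z, P z → z ≤ w q * degDiv a := by
    rintro z ⟨x, ⟨hlin, heff⟩, rfl⟩
    have hdeg : degDiv x = degDiv a := (linEquiv_degDiv m hsymm hloop hlin).symm
    have : Φ x ≤ ∑ v, x v * w q := by
      rw [hΦdef]
      dsimp only
      rw [← Finset.add_sum_erase _ (fun v => x v * w v) (Finset.mem_univ q),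
        ← Finset.add_sum_erase _ (fun v => x v * w q) (Finset.mem_univ q)]
      have : ∑ v ∈ univ.erase q, x v * w v ≤ ∑ v ∈ univ.erase q, x v * w q := by
        refine Finset.sum_le_sum fun v hv => ?_
        exact mul_le_mul_of_nonneg_left (hwq v) (heff v (Finset.mem_erase.mp hv).1)
      linarith
    calc Φ x ≤ ∑ v, x v * w q := this
      _ = w q * degDiv a := by rw [← hdeg, degDiv, ← Finset.sum_mul, mul_comm]
  have hinh : ∃ z, P z := by
    obtain ⟨x, hlin, heff⟩ := exists_equiv_eff_off_q hsymm hloop hconn q a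
    exact ⟨Φ x, x, ⟨hlin, heff⟩, rfl⟩
  obtain ⟨z₀, ⟨x₀, ⟨hlin₀, heff₀⟩, hΦ₀⟩, hmax⟩ :=
    Int.exists_greatest_of_bdd ⟨w q * degDiv a, hbdd⟩ hinh
  refine ⟨x₀, hlin₀, heff₀, ?_⟩
  intro A hA hqA
  by_contra hcon
  push_neg at hcon
  -- fire the set A
  set x₁ : V → ℤ := x₀ + tZ m A with hx₁
  have hlin₁ : LinEquiv m a x₁ := by
    rw [LinEquiv]
    have : a - x₁ = (a - x₀) - tZ m A := by rw [hx₁]; abel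
    rw [this]
    exact sub_mem hlin₀ (AddSubgroup.subset_closure (Set.mem_range_self A))
  have htZA : ∀ v, v ∈ A → tZ m A v = -(∑ u ∈ Aᶜ, (m v u : ℤ)) := by
    intro v hv; rw [tZ, if_pos hv]
  have htZA' : ∀ v, v ∉ A → tZ m A v = ∑ u ∈ A, (m v u : ℤ) := by
    intro v hv; rw [tZ, if_neg hv]
  have heff₁ : ∀ v, v ≠ q → 0 ≤ x₁ v := by
    intro v hv
    by_cases hvA : v ∈ A
    · have := hcon v hvA
      rw [hx₁, Pi.add_apply, htZA v hvA]
      omega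
    · rw [hx₁, Pi.add_apply, htZA' v hvA]
      have : (0:ℤ) ≤ ∑ u ∈ A, (m v u : ℤ) := Finset.sum_nonneg fun u _ => by positivity
      have := heff₀ v hv
      omega
  -- the firing strictly increases Φ
  have hS : Φ x₁ = Φ x₀ + ∑ v ∈ A, ∑ u ∈ Aᶜ, (m v u : ℤ) * (w u - w v) := by
    have h1 : Φ x₁ = Φ x₀ + ∑ v, tZ m A v * w v := by
      rw [hΦdef]
      dsimp only
      rw [hx₁]
      simp only [Pi.add_apply, add_mul]
      rw [Finset.sum_add_distrib]
    have h2 : ∑ v, tZ m A v * w v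
        = ∑ v ∈ A, ∑ u ∈ Aᶜ, (m v u : ℤ) * (w u - w v) := by
      rw [← Finset.sum_add_sum_compl A (fun v => tZ m A v * w v)]
      have hA1 : ∑ v ∈ A, tZ m A v * w v
          = -∑ v ∈ A, ∑ u ∈ Aᶜ, (m v u : ℤ) * w v := by
        rw [← Finset.sum_neg_distrib]
        refine Finset.sum_congr rfl fun v hv => ?_
        rw [htZA v hv, ← Finset.sum_neg_distrib, Finset.sum_mul, ← Finset.sum_neg_distrib]
        exact Finset.sum_congr rfl fun u _ => by ring
      have hA2 : ∑ v ∈ Aᶜ, tZ m A v * w v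
          = ∑ v ∈ A, ∑ u ∈ Aᶜ, (m v u : ℤ) * w u := by
        have : ∑ v ∈ Aᶜ, tZ m A v * w v = ∑ v ∈ Aᶜ, ∑ u ∈ A, (m v u : ℤ) * w v := by
          refine Finset.sum_congr rfl fun v hv => ?_
          rw [htZA' v (Finset.mem_compl.mp hv), Finset.sum_mul]
        rw [this, Finset.sum_comm]
        refine Finset.sum_congr rfl fun v hv => Finset.sum_congr rfl fun u hu => ?_
        rw [hsymm]
      rw [hA1, hA2]
      have hsplit : ∀ v ∈ A, ∑ u ∈ Aᶜ, (m v u : ℤ) * (w u - w v)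
          = (∑ u ∈ Aᶜ, (m v u : ℤ) * w u) - ∑ u ∈ Aᶜ, (m v u : ℤ) * w v := by
        intro v _
        rw [← Finset.sum_sub_distrib]
        exact Finset.sum_congr rfl fun u _ => by ring
      rw [Finset.sum_congr rfl hsplit, Finset.sum_sub_distrib]
      ring
    rw [h1, h2]
  -- the double sum is positive
  obtain ⟨u₀, hu₀A, hu₀min⟩ := Finset.exists_min_image A (fun v => dst m q v) hA
  have hu₀ne : u₀ ≠ q := fun h => hqA (h ▸ hu₀A)
  obtain ⟨z, hzpos, hzd⟩ := exists_closer_neighbor hsymm hconn hu₀ne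
  have hzA : z ∉ A := by
    intro hzA
    have := hu₀min z hzA
    omega
  have hd₀pos : 0 < dst m q u₀ := dst_pos hconn hu₀ne
  have hd₀lt : dst m q u₀ < n := dst_lt_card hconn q u₀
  set W₀ : ℤ := B^(n - 1 - dst m q u₀) with hW₀
  have hW₀pos : 0 < W₀ := by rw [hW₀]; positivity
  have hwu₀ : w u₀ = W₀ := rfl
  have hwz : w z = B * W₀ := by
    rw [hwdef, hW₀]
    dsimp only
    rw [← pow_succ']
    congr 1
    omega
  have hwA : ∀ v ∈ A, w v ≤ W₀ := by
    intro v hv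
    rw [hwdef, hW₀]
    dsimp only
    exact pow_le_pow_right₀ hB1 (by have := hu₀min v hv; omega)
  have hSpos : 0 < ∑ v ∈ A, ∑ u ∈ Aᶜ, (m v u : ℤ) * (w u - w v) := by
    rw [← Finset.sum_product']
    have hmem : (u₀, z) ∈ A ×ˢ Aᶜ := Finset.mem_product.mpr ⟨hu₀A, Finset.mem_compl.mpr hzA⟩
    rw [← Finset.add_sum_erase _ (fun p => (m p.1 p.2 : ℤ) * (w p.2 - w p.1)) hmem]
    have hgood : (B - 1) * W₀ ≤ (m u₀ z : ℤ) * (w z - w u₀) := by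
      rw [hwz, hwu₀]
      have h1 : (1:ℤ) ≤ (m u₀ z : ℤ) := by exact_mod_cast hzpos
      have h2 : (0:ℤ) ≤ (B-1) * W₀ := mul_nonneg (by omega) hW₀pos.le
      nlinarith [mul_nonneg (sub_nonneg.mpr h1) h2]
    have hrest : -(Mt * W₀) ≤ ∑ p ∈ (A ×ˢ Aᶜ).erase (u₀, z), (m p.1 p.2 : ℤ) * (w p.2 - w p.1) := by
      have hterm : ∀ p ∈ (A ×ˢ Aᶜ).erase (u₀, z),
          -((m p.1 p.2 : ℤ) * W₀) ≤ (m p.1 p.2 : ℤ) * (w p.2 - w p.1) := by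
        intro p hp
        have hpA := (Finset.mem_product.mp (Finset.mem_erase.mp hp).2).1
        have h1 : w p.1 ≤ W₀ := hwA p.1 hpA
        have h2 : 0 ≤ w p.2 := hw0 p.2
        nlinarith [Nat.cast_nonneg (α := ℤ) (m p.1 p.2)]
      calc -(Mt * W₀) ≤ -((∑ p ∈ (A ×ˢ Aᶜ).erase (u₀, z), (m p.1 p.2 : ℤ)) * W₀) := by
            have : ∑ p ∈ (A ×ˢ Aᶜ).erase (u₀, z), (m p.1 p.2 : ℤ) ≤ Mt := by
              rw [hMt, ← Finset.sum_product']
              refine Finset.sum_le_sum_of_subset_of_nonneg ?_ (fun p _ _ => by positivity)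
              intro p _
              exact Finset.mem_product.mpr ⟨Finset.mem_univ _, Finset.mem_univ _⟩
            nlinarith
        _ ≤ _ := by
            rw [Finset.sum_mul, ← Finset.sum_neg_distrib]
            exact Finset.sum_le_sum hterm
    have hkey : (B - 1) * W₀ - Mt * W₀ = W₀ := by rw [hBdef]; ring
    linarith
  have hP₁ : P (Φ x₁) := ⟨x₁, ⟨hlin₁, heff₁⟩, rfl⟩
  have := hmax _ hP₁
  rw [hS] at this
  omega

lemma build_rho (q : V) (x : V → ℤ)
    (hred : ∀ A : Finset V, A.Nonempty → q ∉ A → ∃ v ∈ A, x v + 1 ≤ ∑ u ∈ Aᶜ, (m v u : ℤ)) :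
    ∀ A : Finset V, q ∉ A → ∃ ρ : V → ℤ, Function.Injective ρ ∧
      (∀ v ∈ A, 0 < ρ v) ∧ (∀ v, v ∉ A → ρ v ≤ 0) ∧
      (∀ v ∈ A, x v + 1 ≤ ∑ u ∈ univ.filter (fun u => ρ u < ρ v), (m v u : ℤ)) := by
  intro A
  induction A using Finset.strongInduction with
  | _ A ih =>
    intro hqA
    rcases A.eq_empty_or_nonempty with rfl | hA
    · refine ⟨fun v => -((Fintype.equivFin V v : ℕ) : ℤ), ?_, ?_, ?_, ?_⟩
      · intro u v h
        simp only [neg_inj, Nat.cast_inj] at h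
        exact (Fintype.equivFin V).injective (Fin.val_injective h)
      · intro v hv; exact absurd hv (Finset.notMem_empty v)
      · intro v _; simp
      · intro v hv; exact absurd hv (Finset.notMem_empty v)
    · obtain ⟨v, hvA, hv⟩ := hred A hA hqA
      have hss : A.erase v ⊂ A := Finset.erase_ssubset hvA
      have hqA' : q ∉ A.erase v := fun h => hqA (Finset.mem_of_mem_erase h)
      obtain ⟨ρ', hinj', hpos', hneg', hbound'⟩ := ih (A.erase v) hss hqA'
      set ρ : V → ℤ := fun u => if u ∈ A.erase v then ρ' u + 1 else if u = v then 1 else ρ' u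
        with hρdef
      have hρerase : ∀ u ∈ A.erase v, ρ u = ρ' u + 1 := by
        intro u hu; rw [hρdef]; dsimp only; rw [if_pos hu]
      have hρv : ρ v = 1 := by
        rw [hρdef]; dsimp only
        rw [if_neg (Finset.notMem_erase v A), if_pos rfl]
      have hρout : ∀ u, u ∉ A → ρ u = ρ' u := by
        intro u hu
        have h1 : u ∉ A.erase v := fun h => hu (Finset.mem_of_mem_erase h)
        have h2 : u ≠ v := fun h => hu (h ▸ hvA)
        rw [hρdef]; dsimp only; rw [if_neg h1, if_neg h2]
      have hρerase2 : ∀ u ∈ A.erase v, 2 ≤ ρ u := by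
        intro u hu
        rw [hρerase u hu]
        have := hpos' u hu
        omega
      have hρoutle : ∀ u, u ∉ A → ρ u ≤ 0 := by
        intro u hu
        rw [hρout u hu]
        exact hneg' u (fun h => hu (Finset.mem_of_mem_erase h))
      refine ⟨ρ, ?_, ?_, ?_, ?_⟩
      · intro s t hst
        have zone : ∀ u : V, (u ∈ A.erase v ∧ 2 ≤ ρ u) ∨ (u = v ∧ ρ u = 1) ∨ (u ∉ A ∧ ρ u ≤ 0) := by
          intro u
          by_cases hu : u ∈ A.erase v
          · exact Or.inl ⟨hu, hρerase2 u hu⟩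
          · by_cases huv : u = v
            · exact Or.inr (Or.inl ⟨huv, huv ▸ hρv⟩)
            · have huA : u ∉ A := fun h => hu (Finset.mem_erase.mpr ⟨huv, h⟩)
              exact Or.inr (Or.inr ⟨huA, hρoutle u huA⟩)
        rcases zone s with ⟨hs, hs2⟩ | ⟨hs, hs2⟩ | ⟨hs, hs2⟩ <;>
          rcases zone t with ⟨ht, ht2⟩ | ⟨ht, ht2⟩ | ⟨ht, ht2⟩
        · have e1 := hρerase s hs
          have e2 := hρerase t ht
          exact hinj' (by omega)
        · exact absurd hst (by omega)
        · exact absurd hst (by omega)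
        · exact absurd hst (by omega)
        · rw [hs, ht]
        · exact absurd hst (by omega)
        · exact absurd hst (by omega)
        · exact absurd hst (by omega)
        · rw [hρout s hs, hρout t ht] at hst
          exact hinj' hst
      · intro s hs
        by_cases hsv : s = v
        · rw [hsv, hρv]; omega
        · have := hρerase2 s (Finset.mem_erase.mpr ⟨hsv, hs⟩); omega
      · intro s hs
        exact hρoutle s hs
      · intro s hs
        by_cases hsv : s = v
        · subst hsv
          have hfilter : univ.filter (fun u => ρ u < ρ s) = Aᶜ := by
            ext u
            simp only [Finset.mem_filter, Finset.mem_univ, true_and, Finset.mem_compl]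
            constructor
            · intro h
              intro huA
              by_cases huv : u = s
              · rw [huv] at h; omega
              · have := hρerase2 u (Finset.mem_erase.mpr ⟨huv, huA⟩)
                rw [hρv] at h; omega
            · intro h
              rw [hρout u h, hρv]
              have := hρoutle u h
              have := hneg' u (fun hh => h (Finset.mem_of_mem_erase hh))
              omega
          rw [hfilter]
          exact hv
        · have hsA : s ∈ A.erase v := Finset.mem_erase.mpr ⟨hsv, hs⟩
          have hfilter : univ.filter (fun u => ρ u < ρ s) = univ.filter (fun u => ρ' u < ρ' s) := by
            ext u
            simp only [Finset.mem_filter, Finset.mem_univ, true_and]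
            have hs2 := hρerase2 s hsA
            have hs2' := hpos' s hsA
            have hseq := hρerase s hsA
            by_cases hu : u ∈ A.erase v
            · rw [hρerase u hu, hseq]
              omega
            · by_cases huv : u = v
              · subst huv
                rw [hρv, hseq]
                have := hneg' u (Finset.notMem_erase u A)
                omega
              · have huA : u ∉ A := by
                  intro h
                  exact hu (Finset.mem_erase.mpr ⟨huv, h⟩)
                rw [hρout u huA, hseq]
                have := hneg' u (fun hh => huA (Finset.mem_of_mem_erase hh))
                omega
          rw [hfilter]
          exact hbound' s hsA

theorem star_dichotomy (hsymm : ∀ u v, m u v = m v u) (hloop : ∀ v, m v v = 0)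
    (hconn : (assocGraph m).Connected) (a : V → ℤ) :
    (∃ f, Effective f ∧ LinEquiv m a f) ∨
      (∃ ρ : V → ℤ, Function.Injective ρ ∧ ∃ f, Effective f ∧ LinEquiv m (nu m ρ - a) f) := by
  have hV : Nonempty V := hconn.nonempty
  set q := Classical.arbitrary V with hq
  obtain ⟨x, hlin, heff, hred⟩ := exists_reduced hsymm hloop hconn q a
  by_cases hxq : 0 ≤ x q
  · left
    refine ⟨x, ?_, hlin⟩
    intro v
    by_cases hv : v = q
    · rw [hv]; exact hxq
    · exact heff v hv
  · right
    obtain ⟨ρ, hinj, hpos, hneg, hbound⟩ := build_rho q x hred (univ.erase q)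
      (Finset.notMem_erase q univ)
    refine ⟨ρ, hinj, nu m ρ - x, ?_, ?_⟩
    · intro v
      by_cases hv : v = q
      · have h1 : (0:ℤ) ≤ ∑ u ∈ univ.filter (fun u => ρ u < ρ v), (m v u : ℤ) :=
          Finset.sum_nonneg fun u _ => by positivity
        have hxv : x v ≤ -1 := by rw [hv]; omega
        simp only [Pi.sub_apply, nu]
        omega
      · have := hbound v (Finset.mem_erase.mpr ⟨hv, Finset.mem_univ v⟩)
        simp only [Pi.sub_apply, nu]
        omega
    · rw [LinEquiv]
      have heq : (nu m ρ - a) - (nu m ρ - x) = -(a - x) := by abel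
      rw [heq]
      exact neg_mem hlin

end StarLemma

section RankFacts

variable {m : V → V → ℕ}

lemma degDiv_single (v₀ : V) (c : ℤ) : degDiv (fun v => if v = v₀ then c else 0) = c := by
  rw [degDiv, Finset.sum_ite_eq' univ v₀ (fun _ => c), if_pos (Finset.mem_univ v₀)]

lemma neg_one_mem_rankSet (d : V → ℤ) : (-1 : ℤ) ∈ bnRankSet m d := Or.inl rfl

lemma rankSet_bdd (hsymm : ∀ u v, m u v = m v u) (hloop : ∀ v, m v v = 0) [Nonempty V]
    (d : V → ℤ) : ∀ k ∈ bnRankSet m d, k ≤ max 0 (degDiv d) := by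
  intro k hk
  rcases hk with rfl | ⟨hk0, hall⟩
  · have : (0:ℤ) ≤ max 0 (degDiv d) := le_max_left _ _
    omega
  · set v₀ := Classical.arbitrary V
    obtain ⟨f, hf, hlin⟩ := hall (fun v => if v = v₀ then k else 0)
      (fun v => by dsimp only; split <;> omega) (degDiv_single v₀ k)
    have h1 := linEquiv_degDiv m hsymm hloop hlin
    rw [degDiv_sub, degDiv_single] at h1
    have h2 := effective_degDiv_nonneg hf
    have : k ≤ degDiv d := by omega
    exact le_max_of_le_right this

lemma rank_mem (hsymm : ∀ u v, m u v = m v u) (hloop : ∀ v, m v v = 0) [Nonempty V]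
    (d : V → ℤ) : bnRank m d ∈ bnRankSet m d ∧ ∀ k ∈ bnRankSet m d, k ≤ bnRank m d := by
  obtain ⟨z, hz, hub⟩ := Int.exists_greatest_of_bdd
    ⟨max 0 (degDiv d), fun k hk => rankSet_bdd hsymm hloop d k hk⟩
    ⟨-1, neg_one_mem_rankSet d⟩
  have hbdd : BddAbove (bnRankSet m d) := ⟨max 0 (degDiv d), fun k hk => rankSet_bdd hsymm hloop d k hk⟩
  have heq : bnRank m d = z := by
    rw [bnRank]
    refine le_antisymm (csSup_le ⟨-1, neg_one_mem_rankSet d⟩ hub) (le_csSup hbdd hz)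
  rw [heq]
  exact ⟨hz, hub⟩

lemma rankSet_downward [Nonempty V] (d : V → ℤ) {k j : ℤ}
    (hk : k ∈ bnRankSet m d) (hj : 0 ≤ j) (hjk : j ≤ k) : j ∈ bnRankSet m d := by
  rcases hk with rfl | ⟨hk0, hall⟩
  · omega
  · right
    refine ⟨hj, ?_⟩
    intro e he hdeg
    set v₀ := Classical.arbitrary V
    set δ : V → ℤ := fun v => if v = v₀ then k - j else 0 with hδ
    have hδeff : Effective δ := fun v => by rw [hδ]; dsimp only; split <;> omega
    obtain ⟨f, hf, hlin⟩ := hall (e + δ)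
      (fun v => add_nonneg (he v) (hδeff v))
      (by rw [degDiv_add, hdeg, hδ, degDiv_single]; ring)
    refine ⟨f + δ, fun v => add_nonneg (hf v) (hδeff v), ?_⟩
    rw [LinEquiv]
    have heq : (d - e) - (f + δ) = (d - (e + δ)) - f := by abel
    rw [heq]
    exact hlin

lemma split_effective_nat [Nonempty V] (b : ℤ) (hb : 0 ≤ b) :
    ∀ (k : ℕ), ∀ e : V → ℤ, Effective e → degDiv e = (k : ℤ) + b →
    ∃ e₁ e₂ : V → ℤ, Effective e₁ ∧ Effective e₂ ∧ e = e₁ + e₂ ∧ degDiv e₁ = (k : ℤ) ∧ degDiv e₂ = b := by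
  intro k
  induction k with
  | zero =>
    intro e he hdeg
    exact ⟨0, e, fun v => le_refl 0, he, (zero_add e).symm, by simp [degDiv],
      by rw [hdeg]; push_cast; ring⟩
  | succ k ih =>
    intro e he hdeg
    have hex : ∃ v₀, 0 < e v₀ := by
      by_contra h
      push_neg at h
      have h1 : degDiv e ≤ 0 := Finset.sum_nonpos fun v _ => h v
      have h2 : ((k:ℤ) + 1) + b ≤ 0 := by push_cast at hdeg; omega
      have h3 : (0:ℤ) ≤ (k:ℤ) := by positivity
      omega
    obtain ⟨v₀, hv₀⟩ := hex
    set δ : V → ℤ := fun v => if v = v₀ then (1:ℤ) else 0 with hδ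
    have heff' : Effective (e - δ) := by
      intro v
      rw [hδ]
      simp only [Pi.sub_apply]
      have := he v
      split <;> rename_i h
      · subst h; omega
      · omega
    have hdeg' : degDiv (e - δ) = (k:ℤ) + b := by
      rw [degDiv_sub, hdeg, hδ, degDiv_single]; push_cast; ring
    obtain ⟨e₁, e₂, he₁, he₂, hsum, hd₁, hd₂⟩ := ih (e - δ) heff' hdeg'
    refine ⟨e₁ + δ, e₂, fun v => add_nonneg (he₁ v) ?_, he₂, ?_, ?_, hd₂⟩
    · rw [hδ]; dsimp only; split <;> omega
    · have h5 : e = (e - δ) + δ := by abel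
      rw [h5, hsum]; abel
    · rw [degDiv_add, hd₁, hδ, degDiv_single]; push_cast; ring

lemma split_effective [Nonempty V] (a b : ℤ) (ha : 0 ≤ a) (hb : 0 ≤ b)
    (e : V → ℤ) (he : Effective e) (hdeg : degDiv e = a + b) :
    ∃ e₁ e₂ : V → ℤ, Effective e₁ ∧ Effective e₂ ∧ e = e₁ + e₂ ∧ degDiv e₁ = a ∧ degDiv e₂ = b := by
  have := split_effective_nat b hb a.toNat e he
    (by rw [Int.toNat_of_nonneg ha]; exact hdeg)
  rw [Int.toNat_of_nonneg ha] at this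
  exact this

lemma exists_good_rho (hsymm : ∀ u v, m u v = m v u)
    (hconn : (assocGraph m).Connected) (q : V) :
    ∃ ρ : V → ℤ, Function.Injective ρ ∧ (∀ v, v ≠ q → 0 ≤ nu m ρ v) ∧ nu m ρ q = -1 := by
  classical
  set n := Fintype.card V with hn
  set ρ : V → ℤ := fun v => (dst m q v : ℤ) * n + ((Fintype.equivFin V v : ℕ) : ℤ) with hρ
  have hefn : ∀ v : V, ((Fintype.equivFin V v : ℕ) : ℤ) < n := by
    intro v
    exact_mod_cast (Fintype.equivFin V v).2
  have hef0 : ∀ v : V, (0:ℤ) ≤ ((Fintype.equivFin V v : ℕ) : ℤ) := fun v => by positivity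
  have hV : Nonempty V := hconn.nonempty
  have hn0 : (0:ℤ) < n := by
    have h := Fintype.card_pos (α := V)
    rw [hn]
    exact_mod_cast h
  have hlt : ∀ (d₁ d₂ r₁ r₂ : ℤ), d₁ < d₂ → 0 ≤ r₁ → r₁ < n → 0 ≤ r₂ →
      d₁ * n + r₁ < d₂ * n + r₂ := by
    intro d₁ d₂ r₁ r₂ h hr₁ hr₁' hr₂
    nlinarith [mul_le_mul_of_nonneg_right (by omega : d₁ + 1 ≤ d₂) (le_of_lt hn0)]
  have hinj : Function.Injective ρ := by
    intro u v h
    rw [hρ] at h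
    dsimp only at h
    have h1 := hefn u
    have h2 := hefn v
    have h3 := hef0 u
    have h4 := hef0 v
    have hdd : (dst m q u : ℤ) = dst m q v := by
      rcases lt_trichotomy ((dst m q u : ℤ)) ((dst m q v : ℤ)) with hc | hc | hc
      · exact absurd h (ne_of_lt (hlt _ _ _ _ hc h3 h1 h4))
      · exact hc
      · exact absurd h.symm (ne_of_lt (hlt _ _ _ _ hc h4 h2 h3))
    have hr : (Fintype.equivFin V u : ℕ) = (Fintype.equivFin V v : ℕ) := by
      have : ((Fintype.equivFin V u : ℕ) : ℤ) = ((Fintype.equivFin V v : ℕ) : ℤ) := by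
        rw [hdd] at h
        omega
      exact_mod_cast this
    exact (Fintype.equivFin V).injective (Fin.val_injective hr)
  have hρq : ∀ u, ¬ ρ u < ρ q := by
    intro u hu
    rw [hρ] at hu
    dsimp only at hu
    rw [dst_self] at hu
    have h1 := hefn q
    have h2 := hef0 u
    have h3 := hef0 q
    have hdu : (dst m q u : ℤ) = 0 := by
      by_contra hne
      have hge : (1:ℤ) ≤ (dst m q u : ℤ) := by
        have := Int.natCast_nonneg (dst m q u)
        omega
      have := hlt 0 (dst m q u) ((Fintype.equivFin V q : ℕ) : ℤ) ((Fintype.equivFin V u : ℕ) : ℤ)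
        (by omega) h3 h1 h2
      simp only [zero_mul, zero_add] at this
      omega
    have : dst m q u = 0 := by exact_mod_cast hdu
    have := dst_eq_zero hconn this
    subst this
    rw [dst_self] at hu
    omega
  refine ⟨ρ, hinj, ?_, ?_⟩
  · intro v hv
    obtain ⟨u, hupos, hud⟩ := exists_closer_neighbor hsymm hconn hv
    have huρ : ρ u < ρ v := by
      rw [hρ]
      dsimp only
      have h1 := hefn u
      have h2 := hef0 v
      have h3 : (dst m q u : ℤ) + 1 = (dst m q v : ℤ) := by exact_mod_cast hud
      exact hlt _ _ _ _ (by omega) (hef0 u) h1 h2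
    have hmem : u ∈ univ.filter (fun u => ρ u < ρ v) := by
      simp only [Finset.mem_filter, Finset.mem_univ, true_and]
      exact huρ
    have h1 : (1:ℤ) ≤ (m v u : ℤ) := by exact_mod_cast hupos
    have h2 : (1:ℤ) ≤ ∑ u ∈ univ.filter (fun u => ρ u < ρ v), (m v u : ℤ) := by
      calc (1:ℤ) ≤ (m v u : ℤ) := h1
        _ ≤ _ := Finset.single_le_sum (f := fun u => (m v u : ℤ))
            (fun i _ => by positivity) hmem
    rw [nu]
    omega
  · rw [nu]
    have : univ.filter (fun u => ρ u < ρ q) = ∅ := by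
      rw [Finset.filter_eq_empty_iff]
      intro u _
      exact hρq u
    rw [this]
    simp

end RankFacts

end CliffordAux


open CliffordAux

/-- **Clifford inequality for the Baker–Norine rank.** -/
theorem bnRank_clifford {V : Type} [Fintype V] [DecidableEq V]
    (m : V → V → ℕ) (hsymm : ∀ u v, m u v = m v u) (hloop : ∀ v, m v v = 0)
    (hconn : (assocGraph m).Connected)
    (d : V → ℤ) (h0 : 0 ≤ degDiv d) (h1 : degDiv d ≤ 2 * genus m - 2) :
    2 * bnRank m d ≤ degDiv d := by
  classical
  have hV : Nonempty V := hconn.nonempty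
  set g := genus m with hg
  set K := canonical m with hK
  set r := bnRank m d with hr
  set s := bnRank m (K - d) with hs
  set t := bnRank m K with ht
  -- an injective labelling
  set ρ0 : V → ℤ := fun v => ((Fintype.equivFin V v : ℕ) : ℤ) with hρ0
  have hinj0 : Function.Injective ρ0 := by
    intro u v h
    rw [hρ0] at h
    dsimp only at h
    have : (Fintype.equivFin V u : ℕ) = (Fintype.equivFin V v : ℕ) := by exact_mod_cast h
    exact (Fintype.equivFin V).injective (Fin.val_injective this)
  have hinjneg : ∀ ρ : V → ℤ, Function.Injective ρ → Function.Injective (-ρ) := by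
    intro ρ hρ u v h
    have : ρ u = ρ v := by
      have := congrArg id h
      simp only [Pi.neg_apply, id] at this ⊢
      omega
    exact hρ this
  -- key identities
  have hKnu : ∀ ρ : V → ℤ, Function.Injective ρ → nu m ρ + nu m (-ρ) = K := by
    intro ρ hρ
    funext v
    rw [Pi.add_apply, nu_add_nu_neg m hloop hρ v, hK, canonical]
  have hdegnu : ∀ ρ : V → ℤ, Function.Injective ρ → degDiv (nu m ρ) = g - 1 := by
    intro ρ hρ
    rw [degDiv_nu m hsymm hloop hρ, hg, genus]
    ring
  have hdegK : degDiv K = 2 * g - 2 := by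
    have h2 := hKnu ρ0 hinj0
    have h3 : degDiv (nu m ρ0 + nu m (-ρ0)) = degDiv K := by rw [h2]
    rw [degDiv_add, hdegnu ρ0 hinj0, hdegnu (-ρ0) (hinjneg ρ0 hinj0)] at h3
    omega
  have hg1 : 1 ≤ g := by omega
  -- rank facts
  have hrmem := rank_mem hsymm hloop d
  have hsmem := rank_mem hsymm hloop (K - d)
  have htmem := rank_mem hsymm hloop K
  have hrneg1 : -1 ≤ r := hrmem.2 _ (neg_one_mem_rankSet d)
  have hsneg1 : -1 ≤ s := hsmem.2 _ (neg_one_mem_rankSet (K - d))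
  rcases le_or_gt r 0 with hr0 | hr0
  · omega
  -- Claim C : r ≤ degDiv d - g + 1 + s
  have claimC : r ≤ degDiv d - g + 1 + s := by
    by_contra hC
    push_neg at hC
    have hs1 : s + 1 ∉ bnRankSet m (K - d) := by
      intro h
      have := hsmem.2 _ h
      omega
    have hs1' : ∃ e : V → ℤ, Effective e ∧ degDiv e = s + 1 ∧
        ¬ ∃ f, Effective f ∧ LinEquiv m ((K - d) - e) f := by
      by_contra h
      push_neg at h
      exact hs1 (Or.inr ⟨by omega, fun e he hdeg => h e he hdeg⟩)
    obtain ⟨e, he, hdege, hne⟩ := hs1'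
    rcases star_dichotomy hsymm hloop hconn ((K - d) - e) with hleft | ⟨ρ, hρinj, f, hf, hlinf⟩
    · exact hne hleft
    · -- degree of f
      have hdegf : degDiv f = degDiv d + s - g + 2 := by
        have h2 := linEquiv_degDiv m hsymm hloop hlinf
        rw [degDiv_sub, degDiv_sub, degDiv_sub, hdegnu ρ hρinj, hdegK, hdege] at h2
        omega
      have hf0 : 0 ≤ degDiv f := effective_degDiv_nonneg hf
      have hmem : degDiv f ∈ bnRankSet m d :=
        rankSet_downward d hrmem.1 hf0 (by omega)
      rcases hmem with habs | ⟨-, hall⟩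
      · omega
      · obtain ⟨h2, hh2, hlinh⟩ := hall f hf rfl
        have hfin : LinEquiv m (nu m (-ρ)) (h2 + e) := by
          rw [LinEquiv]
          have hKv := hKnu ρ hρinj
          have heq : nu m (-ρ) - (h2 + e) = ((d - f) - h2) - ((nu m ρ - ((K - d) - e)) - f) := by
            funext v
            have hv := congrFun hKv v
            simp only [Pi.add_apply, Pi.sub_apply, Pi.neg_apply] at hv ⊢
            linarith
          rw [heq]
          exact sub_mem hlinh hlinf
        exact nu_not_equiv_eff m hloop (hinjneg ρ hρinj)
          ⟨h2 + e, fun v => add_nonneg (hh2 v) (he v), hfin⟩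
  rcases le_or_gt s 0 with hs0 | hs0
  · -- here s = -1 or s = 0; if s ≤ -1 use claim C directly, else continue below
    rcases le_or_gt s (-1) with hsm1 | hsm1
    · omega
    · -- s = 0 : fall through to the general argument with subadditivity
      -- Claim B : t ≤ g - 1
      have claimB : t ≤ g - 1 := by
        by_contra hB
        push_neg at hB
        have hgmem : g ∈ bnRankSet m K := rankSet_downward K htmem.1 (by omega) (by omega)
        set q := Classical.arbitrary V with hq
        obtain ⟨ρ1, hρ1inj, hρ1pos, hρ1q⟩ := exists_good_rho hsymm hconn q
        set δq : V → ℤ := fun v => if v = q then (1:ℤ) else 0 with hδq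
        have hePos : Effective (nu m ρ1 + δq) := by
          intro v
          by_cases hv : v = q
          · rw [Pi.add_apply, hδq]
            dsimp only
            rw [if_pos hv, hv, hρ1q]; norm_num
          · rw [Pi.add_apply, hδq]
            dsimp only
            rw [if_neg hv]
            have := hρ1pos v hv
            omega
        have heDeg : degDiv (nu m ρ1 + δq) = g := by
          rw [degDiv_add, hdegnu ρ1 hρ1inj, hδq, degDiv_single]
          ring
        rcases hgmem with habs | ⟨-, hall⟩
        · omega
        · obtain ⟨f, hf, hlinf⟩ := hall _ hePos heDeg
          have hfin : LinEquiv m (nu m (-ρ1)) (f + δq) := by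
            rw [LinEquiv]
            have hKv := hKnu ρ1 hρ1inj
            have heq : nu m (-ρ1) - (f + δq) = (K - (nu m ρ1 + δq)) - f := by
              funext v
              have hv := congrFun hKv v
              simp only [Pi.add_apply, Pi.sub_apply, Pi.neg_apply] at hv ⊢
              linarith
            rw [heq]
            exact hlinf
          exact nu_not_equiv_eff m hloop (hinjneg ρ1 hρ1inj)
            ⟨f + δq, fun v => add_nonneg (hf v) (by rw [hδq]; dsimp only; split <;> omega), hfin⟩
      -- Claim A : r + s ≤ t
      have claimA : r + s ∈ bnRankSet m K := by
        right
        refine ⟨by omega, ?_⟩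
        intro e he hdeg
        obtain ⟨e₁, e₂, he₁, he₂, hsum, hd₁, hd₂⟩ :=
          split_effective r s (by omega) (by omega) e he hdeg
        rcases hrmem.1 with habs | ⟨-, hallr⟩
        · omega
        rcases hsmem.1 with habs | ⟨-, halls⟩
        · omega
        obtain ⟨f₁, hf₁, hlin₁⟩ := hallr e₁ he₁ hd₁
        obtain ⟨f₂, hf₂, hlin₂⟩ := halls e₂ he₂ hd₂
        refine ⟨f₁ + f₂, fun v => add_nonneg (hf₁ v) (hf₂ v), ?_⟩
        rw [LinEquiv]
        have heq : (K - e) - (f₁ + f₂) = ((d - e₁) - f₁) + (((K - d) - e₂) - f₂) := by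
          funext v
          have hv := congrFun hsum v
          simp only [Pi.add_apply, Pi.sub_apply] at hv ⊢
          linarith
        rw [heq]
        exact add_mem hlin₁ hlin₂
      have := htmem.2 _ claimA
      omega
  · -- s ≥ 1 case : same subadditivity argument
    have claimB : t ≤ g - 1 := by
      by_contra hB
      push_neg at hB
      have hgmem : g ∈ bnRankSet m K := rankSet_downward K htmem.1 (by omega) (by omega)
      set q := Classical.arbitrary V with hq
      obtain ⟨ρ1, hρ1inj, hρ1pos, hρ1q⟩ := exists_good_rho hsymm hconn q
      set δq : V → ℤ := fun v => if v = q then (1:ℤ) else 0 with hδq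
      have hePos : Effective (nu m ρ1 + δq) := by
        intro v
        by_cases hv : v = q
        · rw [Pi.add_apply, hδq]
          dsimp only
          rw [if_pos hv, hv, hρ1q]; norm_num
        · rw [Pi.add_apply, hδq]
          dsimp only
          rw [if_neg hv]
          have := hρ1pos v hv
          omega
      have heDeg : degDiv (nu m ρ1 + δq) = g := by
        rw [degDiv_add, hdegnu ρ1 hρ1inj, hδq, degDiv_single]
        ring
      rcases hgmem with habs | ⟨-, hall⟩
      · omega
      · obtain ⟨f, hf, hlinf⟩ := hall _ hePos heDeg
        have hfin : LinEquiv m (nu m (-ρ1)) (f + δq) := by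
          rw [LinEquiv]
          have hKv := hKnu ρ1 hρ1inj
          have heq : nu m (-ρ1) - (f + δq) = (K - (nu m ρ1 + δq)) - f := by
            funext v
            have hv := congrFun hKv v
            simp only [Pi.add_apply, Pi.sub_apply, Pi.neg_apply] at hv ⊢
            linarith
          rw [heq]
          exact hlinf
        exact nu_not_equiv_eff m hloop (hinjneg ρ1 hρ1inj)
          ⟨f + δq, fun v => add_nonneg (hf v) (by rw [hδq]; dsimp only; split <;> omega), hfin⟩
    have claimA : r + s ∈ bnRankSet m K := by
      right
      refine ⟨by omega, ?_⟩
      intro e he hdeg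
      obtain ⟨e₁, e₂, he₁, he₂, hsum, hd₁, hd₂⟩ :=
        split_effective r s (by omega) (by omega) e he hdeg
      rcases hrmem.1 with habs | ⟨-, hallr⟩
      · omega
      rcases hsmem.1 with habs | ⟨-, halls⟩
      · omega
      obtain ⟨f₁, hf₁, hlin₁⟩ := hallr e₁ he₁ hd₁
      obtain ⟨f₂, hf₂, hlin₂⟩ := halls e₂ he₂ hd₂
      refine ⟨f₁ + f₂, fun v => add_nonneg (hf₁ v) (hf₂ v), ?_⟩
      rw [LinEquiv]
      have heq : (K - e) - (f₁ + f₂) = ((d - e₁) - f₁) + (((K - d) - e₂) - f₂) := by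
        funext v
        have hv := congrFun hsum v
        simp only [Pi.add_apply, Pi.sub_apply] at hv ⊢
        linarith
      rw [heq]
      exact add_mem hlin₁ hlin₂
    have := htmem.2 _ claimA
    omega
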